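/- Let 0 < r < 1 and let a, b ∈ ℝ³ be unit vectors with -1 < ⟨a,b⟩ < 1 and 1 + ⟨a,b⟩ - 2r² > 0. Set x = Φ_r(a,b) and y = Φ_r(b,a). Then Φ_r(x,y) = a and Φ_r(y,x) = b; that is, the dual-edge construction is an involution. -/

import Mathlib

open scoped RealInnerProductSpace

/-- The cross product on `ℝ³` (as `EuclideanSpace ℝ (Fin 3)`). -/
noncomputable def cross3 (a b : EuclideanSpace ℝ (Fin 3)) : EuclideanSpace ℝ (Fin 3) :=
  (WithLp.equiv 2 (Fin 3 → ℝ)).symm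
    ![a 1 * b 2 - a 2 * b 1, a 2 * b 0 - a 0 * b 2, a 0 * b 1 - a 1 * b 0]

/-- The dual-edge map of the paper:
`Φ_r(a,b) = (1/(1+⟪a,b⟫))·(√((1+⟪a,b⟫-2r²)/(1-⟪a,b⟫))·(a × b) - r·(a+b))`. -/
noncomputable def Phi (r : ℝ) (a b : EuclideanSpace ℝ (Fin 3)) : EuclideanSpace ℝ (Fin 3) :=
  (1 / (1 + ⟪a, b⟫)) •
    (Real.sqrt ((1 + ⟪a, b⟫ - 2 * r ^ 2) / (1 - ⟪a, b⟫)) • cross3 a b - r • (a + b))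

lemma inner3 (a b : EuclideanSpace ℝ (Fin 3)) : ⟪a, b⟫ = a 0 * b 0 + a 1 * b 1 + a 2 * b 2 := by
  simp [PiLp.inner_apply, Fin.sum_univ_three, mul_comm]

lemma cross3_apply (a b : EuclideanSpace ℝ (Fin 3)) (i : Fin 3) :
    cross3 a b i = ![a 1 * b 2 - a 2 * b 1, a 2 * b 0 - a 0 * b 2, a 0 * b 1 - a 1 * b 0] i := by
  rfl

lemma cross3_antisymm (a b : EuclideanSpace ℝ (Fin 3)) : cross3 b a = - cross3 a b := by
  ext i
  fin_cases i <;> simp [cross3_apply] <;> ring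

lemma cross3_triple (a b d : EuclideanSpace ℝ (Fin 3)) :
    cross3 (cross3 a b) d = ⟪a, d⟫ • b - ⟪b, d⟫ • a := by
  ext i
  fin_cases i <;> simp [cross3_apply, inner3, Fin.sum_univ_three] <;> ring

lemma cross3_expand (p q p' q' : ℝ) (u v : EuclideanSpace ℝ (Fin 3)) :
    cross3 (p • u + q • v) (p' • u + q' • v) = (p * q' - q * p') • cross3 u v := by
  ext i
  fin_cases i <;> simp [cross3_apply] <;> ring

lemma inner_cross_left (a b : EuclideanSpace ℝ (Fin 3)) : ⟪cross3 a b, a⟫ = 0 := by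
  simp [inner3, cross3_apply, Fin.sum_univ_three]; ring
lemma inner_cross_right (a b : EuclideanSpace ℝ (Fin 3)) : ⟪cross3 a b, b⟫ = 0 := by
  simp [inner3, cross3_apply, Fin.sum_univ_three]; ring
lemma inner_cross_self (a b : EuclideanSpace ℝ (Fin 3)) :
    ⟪cross3 a b, cross3 a b⟫ = ⟪a,a⟫ * ⟪b,b⟫ - ⟪a,b⟫ ^ 2 := by
  simp only [inner3]; simp [cross3_apply]; ring


set_option maxHeartbeats 1000000 in
/-- The dual-edge construction is an involution: with `x = Φ_r(a,b)` and `y = Φ_r(b,a)`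
one has `Φ_r(x,y) = a` and `Φ_r(y,x) = b`. -/
theorem stmt_15 (r : ℝ) (hr0 : 0 < r) (hr1 : r < 1)
    (a b : EuclideanSpace ℝ (Fin 3)) (ha : ‖a‖ = 1) (hb : ‖b‖ = 1)
    (h₁ : -1 < ⟪a, b⟫) (h₂ : ⟪a, b⟫ < 1) (h₃ : 0 < 1 + ⟪a, b⟫ - 2 * r ^ 2)
    (x y : EuclideanSpace ℝ (Fin 3)) (hx : x = Phi r a b) (hy : y = Phi r b a) :
    Phi r x y = a ∧ Phi r y x = b := by
  have hsym : ⟪b,a⟫ = ⟪a,b⟫ := real_inner_comm a b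
  have haa : ⟪a,a⟫ = (1:ℝ) := by rw [real_inner_self_eq_norm_sq, ha]; norm_num
  have hbb : ⟪b,b⟫ = (1:ℝ) := by rw [real_inner_self_eq_norm_sq, hb]; norm_num
  set t := ⟪a,b⟫ with ht
  have ht1 : (0:ℝ) < 1 + t := by linarith
  have ht2 : (0:ℝ) < 1 - t := by linarith
  set s := Real.sqrt ((1 + t - 2*r^2)/(1-t)) with hsdef
  have hs0 : 0 < s := Real.sqrt_pos.mpr (div_pos h₃ ht2)
  have hs2 : s^2 * (1 - t) = 1 + t - 2*r^2 := by
    rw [hsdef, Real.sq_sqrt (div_pos h₃ ht2).le]; field_simp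
  have hx' : x = (s/(1+t)) • cross3 a b + (-r/(1+t)) • (a+b) := by
    rw [hx]; unfold Phi; rw [← ht, ← hsdef]; module
  have hy' : y = (-(s/(1+t))) • cross3 a b + (-r/(1+t)) • (a+b) := by
    rw [hy]; unfold Phi; rw [hsym, ← hsdef, cross3_antisymm]; module
  have hca : ⟪cross3 a b, a⟫ = (0:ℝ) := inner_cross_left a b
  have hcb : ⟪cross3 a b, b⟫ = (0:ℝ) := inner_cross_right a b
  have hac : ⟪a, cross3 a b⟫ = (0:ℝ) := by rw [real_inner_comm]; exact hca
  have hbc : ⟪b, cross3 a b⟫ = (0:ℝ) := by rw [real_inner_comm]; exact hcb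
  have hcc : ⟪cross3 a b, cross3 a b⟫ = 1 - t^2 := by
    rw [inner_cross_self, haa, hbb, ← ht]; ring
  have hxy : ⟪x,y⟫ = (4*r^2 - 1 - t)/(1+t) := by
    rw [hx', hy']
    simp only [inner_add_left, inner_add_right, real_inner_smul_left, real_inner_smul_right,
      hca, hcb, hac, hbc, hcc, haa, hbb, hsym, ← ht]
    field_simp
    linear_combination (-(1+t)) * hs2
  have hne : 1 + t - 2*r^2 ≠ 0 := h₃.ne'
  have hu1 : 1 + ⟪x,y⟫ = 4*r^2/(1+t) := by rw [hxy]; field_simp; try ring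
  have hu2 : 1 - ⟪x,y⟫ = 2*(1+t-2*r^2)/(1+t) := by rw [hxy]; field_simp; try ring
  have hu3 : 1 + ⟪x,y⟫ - 2*r^2 = 2*r^2*(1-t)/(1+t) := by rw [hxy]; field_simp; try ring
  have harg : (1 + ⟪x,y⟫ - 2*r^2)/(1 - ⟪x,y⟫) = (r/s)^2 := by
    rw [hu3, hu2]
    field_simp
    linear_combination hs2
  have hs' : Real.sqrt ((1 + ⟪x,y⟫ - 2*r^2)/(1 - ⟪x,y⟫)) = r/s := by
    rw [harg, Real.sqrt_sq (by positivity)]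
  have hab1 : ⟪a, a+b⟫ = 1 + t := by rw [inner_add_right, haa, ← ht]
  have hab2 : ⟪b, a+b⟫ = 1 + t := by rw [inner_add_right, hbb, hsym]; ring
  have hcxy : cross3 x y = (2*s*r/(1+t)) • (a - b) := by
    rw [hx', hy', cross3_expand, cross3_triple, hab1, hab2]
    match_scalars <;> field_simp <;> ring
  constructor
  · unfold Phi
    rw [hs', hcxy, hu1, hx', hy']
    match_scalars <;> field_simp <;> ring
  · unfold Phi
    rw [real_inner_comm x y, hs', cross3_antisymm x y, hcxy, hu1, hx', hy']
    match_scalars <;> field_simp <;> ring
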